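/- Let n ≥ 2, let f : [2n−1] → ℝ satisfy f(1)−f(2) ≥ f(2)−f(3) ≥ ⋯ ≥ f(2n−2)−f(2n−1) ≥ 0, and define b_j = (f(j)−f(j+1)) − (f(j+1)−f(j+2)) for j ∈ [2n−3] and b_{2n−2} = f(2n−2)−f(2n−1). Then for every (A,B) ∈ P_{2n}, Σ_{x∈A} Σ_{y∈B} f(|x−y|) ≤ n²·f(2n−1) + Σ_{j=1}^{2n−2} c_{2n,j}·b_j. -/

import Mathlib

/-- The constant `c_{2n,l}`: for `l` even, `−l³/12 + (2n−1)l²/4 + (6n−1)l/6`, and for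
`l` odd, `−l³/12 + (2n−1)l²/4 + (12n−5)l/12 + (2n−1)/4`. -/
noncomputable def cConst (n l : ℕ) : ℝ :=
  if Even l then
    -(l : ℝ) ^ 3 / 12 + (2 * (n : ℝ) - 1) * (l : ℝ) ^ 2 / 4 + (6 * (n : ℝ) - 1) * (l : ℝ) / 6
  else
    -(l : ℝ) ^ 3 / 12 + (2 * (n : ℝ) - 1) * (l : ℝ) ^ 2 / 4
      + (12 * (n : ℝ) - 5) * (l : ℝ) / 12 + (2 * (n : ℝ) - 1) / 4

/-! ### Arithmetic auxiliary lemmas -/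

/-- `myq m = ⌊m/2⌋·⌈m/2⌉`, the maximal product of two naturals summing to `m`. -/
def myq (m : ℕ) : ℕ := (m / 2) * ((m + 1) / 2)

lemma myq_le (a b : ℕ) : a * b ≤ myq (a + b) := by
  unfold myq
  rcases Nat.even_or_odd (a + b) with ⟨t, ht⟩ | ⟨t, ht⟩
  · have h1 : (a + b) / 2 = t := by omega
    have h2 : (a + b + 1) / 2 = t := by omega
    rw [h1, h2]; nlinarith [sq_nonneg (a - b : ℤ), sq_nonneg (b - a : ℤ)]
  · have h1 : (a + b) / 2 = t := by omega
    have h2 : (a + b + 1) / 2 = t + 1 := by omega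
    rw [h1, h2]; nlinarith [sq_nonneg (a - b : ℤ), sq_nonneg (b - a : ℤ)]

def myQ (j : ℕ) : ℕ := ∑ m ∈ Finset.Icc 1 j, myq m

lemma myq_odd (k : ℕ) : myq (2 * k + 1) = k * (k + 1) := by
  unfold myq
  rw [show (2 * k + 1) / 2 = k by omega, show (2 * k + 1 + 1) / 2 = k + 1 by omega]

lemma myq_even (k : ℕ) : myq (2 * k) = k * k := by
  unfold myq
  rw [show (2 * k) / 2 = k by omega, show (2 * k + 1) / 2 = k by omega]

lemma myQ_even (k : ℕ) : 6 * myQ (2 * k) + k * (k + 1) = 4 * k * k * (k + 1) := by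
  induction k with
  | zero => simp [myQ]
  | succ k ih =>
    have e : myQ (2 * (k + 1)) = myQ (2 * k) + myq (2 * k + 1) + myq (2 * (k + 1)) := by
      have : 2 * (k + 1) = (2 * k + 1) + 1 := by ring
      rw [this, myQ, Finset.sum_Icc_succ_top (by omega), Finset.sum_Icc_succ_top (by omega)]
      rfl
    rw [e, myq_odd, myq_even]
    zify at ih ⊢
    linear_combination ih

lemma myQ_odd (k : ℕ) : 6 * myQ (2 * k + 1) = k * (k + 1) * (4 * k + 5) := by
  have e : myQ (2 * k + 1) = myQ (2 * k) + myq (2 * k + 1) := by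
    rw [myQ, Finset.sum_Icc_succ_top (by omega)]; rfl
  rw [e, myq_odd]
  have h := myQ_even k
  zify at h ⊢
  linear_combination h

lemma T_eq (n j : ℕ) (hj1 : 1 ≤ j) (hj2 : j ≤ 2 * n - 2) (hn : 2 ≤ n) :
    ((2 * myQ j + (2 * n - j) * myq (j + 1) : ℕ) : ℝ) = cConst n j := by
  have hj2n : j ≤ 2 * n := by omega
  rcases Nat.even_or_odd j with ⟨k, hk⟩ | ⟨k, hk⟩
  · have hj : j = 2 * k := by omega
    subst hj
    have hQ : ((myQ (2 * k) : ℝ)) = (4 * k * k * (k + 1) - k * (k + 1)) / 6 := by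
      have h : (6 * myQ (2 * k) + k * (k + 1) : ℝ) = 4 * k * k * (k + 1) := by
        exact_mod_cast congrArg (Nat.cast : ℕ → ℝ) (myQ_even k)
      linarith
    rw [myq_odd, cConst, if_pos ⟨k, by omega⟩]
    push_cast [Nat.cast_sub hj2n]
    rw [hQ]
    ring
  · subst hk
    have hQ : ((myQ (2 * k + 1) : ℝ)) = k * (k + 1) * (4 * k + 5) / 6 := by
      have h : (6 * myQ (2 * k + 1) : ℝ) = k * (k + 1) * (4 * k + 5) := by
        exact_mod_cast congrArg (Nat.cast : ℕ → ℝ) (myQ_odd k)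
      linarith
    rw [show 2 * k + 1 + 1 = 2 * (k + 1) from by ring, myq_even]
    rw [cConst, if_neg (by simp [Nat.even_add_one, Nat.even_mul])]
    push_cast [Nat.cast_sub hj2n]
    rw [hQ]
    ring

/-! ### The window-sum identity -/

lemma icc_ioc (x : ℕ) : Finset.Icc 1 x = Finset.Ioc 0 x := by
  ext r; simp [Finset.mem_Icc, Finset.mem_Ioc]; omega

lemma window_card (n j r : ℕ) :
    (Finset.Icc 1 (2 * n) ∩ Finset.Icc (r - j) r).card
      = min (2 * n) r + 1 - max 1 (r - j) := by
  rw [show Finset.Icc 1 (2 * n) ∩ Finset.Icc (r - j) r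
      = Finset.Icc (max 1 (r - j)) (min (2 * n) r) by
    ext x; simp [Finset.mem_Icc, Finset.mem_inter]; omega]
  rw [Nat.card_Icc]

lemma window_sum (n j : ℕ) (hj1 : 1 ≤ j) (hj2 : j ≤ 2 * n - 2) (hn : 2 ≤ n) :
    ∑ r ∈ Finset.Icc 1 (2 * n + j),
        myq ((Finset.Icc 1 (2 * n) ∩ Finset.Icc (r - j) r).card)
      = 2 * myQ j + (2 * n - j) * myq (j + 1) := by
  rw [icc_ioc (2 * n + j)]
  rw [← Finset.sum_Ioc_consecutive _ (by omega : (0:ℕ) ≤ 2*n) (by omega : 2*n ≤ 2*n + j)]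
  rw [← Finset.sum_Ioc_consecutive _ (by omega : (0:ℕ) ≤ j) (by omega : j ≤ 2*n)]
  have p1 : ∑ r ∈ Finset.Ioc 0 j,
      myq ((Finset.Icc 1 (2 * n) ∩ Finset.Icc (r - j) r).card) = myQ j := by
    rw [myQ, icc_ioc j]
    apply Finset.sum_congr rfl
    intro r hr
    simp only [Finset.mem_Ioc] at hr
    rw [window_card]
    congr 1
    omega
  have p2 : ∑ r ∈ Finset.Ioc j (2 * n),
      myq ((Finset.Icc 1 (2 * n) ∩ Finset.Icc (r - j) r).card)
        = (2 * n - j) * myq (j + 1) := by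
    rw [Finset.sum_congr rfl (fun r hr => ?_), Finset.sum_const, Nat.card_Ioc, smul_eq_mul]
    simp only [Finset.mem_Ioc] at hr
    rw [window_card]
    congr 1
    omega
  have p3 : ∑ r ∈ Finset.Ioc (2 * n) (2 * n + j),
      myq ((Finset.Icc 1 (2 * n) ∩ Finset.Icc (r - j) r).card) = myQ j := by
    have step : ∀ r ∈ Finset.Ioc (2 * n) (2 * n + j),
        myq ((Finset.Icc 1 (2 * n) ∩ Finset.Icc (r - j) r).card)
          = myq (2 * n + j + 1 - r) := by
      intro r hr
      simp only [Finset.mem_Ioc] at hr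
      rw [window_card]
      congr 1
      omega
    rw [Finset.sum_congr rfl step]
    rw [show Finset.Ioc (2*n) (2*n+j) = Finset.Ico (2*n+1) (2*n+j+1) by
      ext r; simp [Finset.mem_Ioc, Finset.mem_Ico]]
    rw [Finset.sum_Ico_eq_sum_range]
    have e1 : ∀ i ∈ Finset.range j,
        myq (2*n+j+1 - (2*n+1+i)) = (fun t => myq (t+1)) (j - 1 - i) := by
      intro i hi
      simp only [Finset.mem_range] at hi
      congr 1
      omega
    rw [show (2*n+j+1 - (2*n+1)) = j by omega]
    rw [Finset.sum_congr rfl e1, Finset.sum_range_reflect (fun t => myq (t + 1)) j]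
    rw [myQ, show Finset.Icc 1 j = Finset.Ico 1 (j+1) by
      ext r; simp [Finset.mem_Icc, Finset.mem_Ico], Finset.sum_Ico_eq_sum_range]
    simp only [show j + 1 - 1 = j from rfl]
    exact Finset.sum_congr rfl (fun i _ => by rw [Nat.add_comm])
  rw [p1, p2, p3]
  ring

/-! ### Double counting -/

lemma count_windows (n j x y : ℕ) (hx : x ∈ Finset.Icc 1 (2 * n))
    (hy : y ∈ Finset.Icc 1 (2 * n)) :
    ((Finset.Icc 1 (2 * n + j)).filter
        (fun r => x ∈ Finset.Icc (r - j) r ∧ y ∈ Finset.Icc (r - j) r)).card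
      = j + 1 - Nat.dist x y := by
  simp only [Finset.mem_Icc] at hx hy
  rw [show (Finset.Icc 1 (2 * n + j)).filter
        (fun r => x ∈ Finset.Icc (r - j) r ∧ y ∈ Finset.Icc (r - j) r)
      = Finset.Icc (max x y) (min x y + j) by
    ext r; simp only [Finset.mem_filter, Finset.mem_Icc, max_le_iff, le_min_iff,
      le_max_iff, min_le_iff]; omega]
  rw [Nat.card_Icc, Nat.dist]
  omega

lemma myIteMul (p q : Prop) [Decidable p] [Decidable q] :
    (if p then (1 : ℕ) else 0) * (if q then 1 else 0) = if p ∧ q then 1 else 0 := by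
  split_ifs with h1 h2 h3 <;> simp_all

lemma claim1 (n j : ℕ) (A B : Finset ℕ)
    (hAs : A ⊆ Finset.Icc 1 (2 * n)) (hBs : B ⊆ Finset.Icc 1 (2 * n)) :
    ∑ x ∈ A, ∑ y ∈ B, (j + 1 - Nat.dist x y)
      = ∑ r ∈ Finset.Icc 1 (2 * n + j),
          (A ∩ Finset.Icc (r - j) r).card * (B ∩ Finset.Icc (r - j) r).card := by
  have hcard : ∀ (S : Finset ℕ) (r : ℕ), (S ∩ Finset.Icc (r - j) r).card
      = ∑ x ∈ S, if x ∈ Finset.Icc (r - j) r then 1 else 0 := by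
    intro S r
    rw [← Finset.filter_mem_eq_inter, Finset.card_filter]
  symm
  calc ∑ r ∈ Finset.Icc 1 (2 * n + j),
        (A ∩ Finset.Icc (r - j) r).card * (B ∩ Finset.Icc (r - j) r).card
      = ∑ r ∈ Finset.Icc 1 (2 * n + j), ∑ x ∈ A, ∑ y ∈ B,
          (if x ∈ Finset.Icc (r - j) r ∧ y ∈ Finset.Icc (r - j) r then 1 else 0) := by
        refine Finset.sum_congr rfl (fun r _ => ?_)
        rw [hcard A r, hcard B r, Finset.sum_mul_sum]
        exact Finset.sum_congr rfl (fun x _ => Finset.sum_congr rfl (fun y _ => myIteMul _ _))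
    _ = ∑ x ∈ A, ∑ r ∈ Finset.Icc 1 (2 * n + j), ∑ y ∈ B,
          (if x ∈ Finset.Icc (r - j) r ∧ y ∈ Finset.Icc (r - j) r then 1 else 0) :=
        Finset.sum_comm
    _ = ∑ x ∈ A, ∑ y ∈ B, ∑ r ∈ Finset.Icc 1 (2 * n + j),
          (if x ∈ Finset.Icc (r - j) r ∧ y ∈ Finset.Icc (r - j) r then 1 else 0) :=
        Finset.sum_congr rfl (fun x _ => Finset.sum_comm)
    _ = ∑ x ∈ A, ∑ y ∈ B, (j + 1 - Nat.dist x y) := by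
        refine Finset.sum_congr rfl (fun x hx => Finset.sum_congr rfl (fun y hy => ?_))
        rw [← count_windows n j x y (hAs hx) (hBs hy), Finset.card_filter]

/-- The key combinatorial bound: the level-`j` weighted pair count is at most `cConst n j`. -/
lemma S_le (n j : ℕ) (hj1 : 1 ≤ j) (hj2 : j ≤ 2 * n - 2) (hn : 2 ≤ n)
    (A B : Finset ℕ) (hdisj : Disjoint A B)
    (hunion : A ∪ B = Finset.Icc 1 (2 * n)) :
    ((∑ x ∈ A, ∑ y ∈ B, (j + 1 - Nat.dist x y) : ℕ) : ℝ) ≤ cConst n j := by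
  have hAs : A ⊆ Finset.Icc 1 (2 * n) := hunion ▸ Finset.subset_union_left
  have hBs : B ⊆ Finset.Icc 1 (2 * n) := hunion ▸ Finset.subset_union_right
  have hnat : (∑ x ∈ A, ∑ y ∈ B, (j + 1 - Nat.dist x y))
      ≤ 2 * myQ j + (2 * n - j) * myq (j + 1) := by
    rw [claim1 n j A B hAs hBs, ← window_sum n j hj1 hj2 hn]
    apply Finset.sum_le_sum
    intro r _
    have hd : Disjoint (A ∩ Finset.Icc (r - j) r) (B ∩ Finset.Icc (r - j) r) :=
      hdisj.mono Finset.inter_subset_left Finset.inter_subset_left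
    have hsum : (A ∩ Finset.Icc (r - j) r).card + (B ∩ Finset.Icc (r - j) r).card
        = (Finset.Icc 1 (2 * n) ∩ Finset.Icc (r - j) r).card := by
      rw [← Finset.card_union_of_disjoint hd, ← Finset.union_inter_distrib_right, hunion]
    rw [← hsum]
    exact myq_le _ _
  calc ((∑ x ∈ A, ∑ y ∈ B, (j + 1 - Nat.dist x y) : ℕ) : ℝ)
      ≤ ((2 * myQ j + (2 * n - j) * myq (j + 1) : ℕ) : ℝ) := Nat.cast_le.mpr hnat
    _ = cConst n j := T_eq n j hj1 hj2 hn

/-! ### Decomposition of `f` in terms of the `b j` -/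

lemma diff_eq (n : ℕ) (f : ℕ → ℝ) (b : ℕ → ℝ) (hn : 2 ≤ n)
    (hb : ∀ j : ℕ, 1 ≤ j → j ≤ 2 * n - 3 →
      b j = (f j - f (j + 1)) - (f (j + 1) - f (j + 2)))
    (hblast : b (2 * n - 2) = f (2 * n - 2) - f (2 * n - 1)) :
    ∀ m l : ℕ, 2 * n - 2 - l = m → 1 ≤ l → l ≤ 2 * n - 2 →
      f l - f (l + 1) = ∑ i ∈ Finset.Icc l (2 * n - 2), b i := by
  intro m
  induction m with
  | zero =>
    intro l hm h1 h2
    have hl : l = 2 * n - 2 := by omega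
    subst hl
    rw [show 2 * n - 2 + 1 = 2 * n - 1 by omega, Finset.Icc_self, Finset.sum_singleton, hblast]
  | succ m ih =>
    intro l hm h1 h2
    have hl3 : l ≤ 2 * n - 3 := by omega
    have hrec := ih (l + 1) (by omega) (by omega) (by omega)
    have hbl := hb l h1 hl3
    rw [show Finset.Icc l (2 * n - 2) = insert l (Finset.Icc (l + 1) (2 * n - 2)) by
        ext x; simp [Finset.mem_Icc, Finset.mem_insert]; omega,
      Finset.sum_insert (by simp [Finset.mem_Icc]), ← hrec, hbl]
    ring

lemma f_decomp (n : ℕ) (f : ℕ → ℝ) (b : ℕ → ℝ) (hn : 2 ≤ n)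
    (hb : ∀ j : ℕ, 1 ≤ j → j ≤ 2 * n - 3 →
      b j = (f j - f (j + 1)) - (f (j + 1) - f (j + 2)))
    (hblast : b (2 * n - 2) = f (2 * n - 2) - f (2 * n - 1)) :
    ∀ m l : ℕ, 2 * n - 1 - l = m → 1 ≤ l → l ≤ 2 * n - 1 →
      f l = f (2 * n - 1) + ∑ j ∈ Finset.Icc 1 (2 * n - 2), ((j + 1 - l : ℕ) : ℝ) * b j := by
  intro m
  induction m with
  | zero =>
    intro l hm h1 h2
    have hl : l = 2 * n - 1 := by omega
    subst hl
    rw [Finset.sum_eq_zero, add_zero]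
    intro j hj
    simp only [Finset.mem_Icc] at hj
    rw [show j + 1 - (2 * n - 1) = 0 by omega]
    simp
  | succ m ih =>
    intro l hm h1 h2
    have hl2 : l ≤ 2 * n - 2 := by omega
    have hrec := ih (l + 1) (by omega) (by omega) (by omega)
    have hdiff := diff_eq n f b hn hb hblast (2 * n - 2 - l) l rfl h1 hl2
    have key : ∑ j ∈ Finset.Icc 1 (2 * n - 2),
        (((j + 1 - l : ℕ) : ℝ) - ((j + 1 - (l + 1) : ℕ) : ℝ)) * b j
        = ∑ i ∈ Finset.Icc l (2 * n - 2), b i := by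
      rw [← Finset.sum_subset (Finset.Icc_subset_Icc_left h1 :
          Finset.Icc l (2 * n - 2) ⊆ Finset.Icc 1 (2 * n - 2))]
      · apply Finset.sum_congr rfl
        intro j hj
        simp only [Finset.mem_Icc] at hj
        rw [show j + 1 - l = (j + 1 - (l + 1)) + 1 by omega]
        push_cast
        ring
      · intro j hj hj'
        simp only [Finset.mem_Icc] at hj hj'
        rw [show j + 1 - l = 0 by omega, show j + 1 - (l + 1) = 0 by omega]
        simp
    have split : ∑ j ∈ Finset.Icc 1 (2 * n - 2), ((j + 1 - l : ℕ) : ℝ) * b j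
        = ∑ j ∈ Finset.Icc 1 (2 * n - 2), ((j + 1 - (l + 1) : ℕ) : ℝ) * b j
          + ∑ j ∈ Finset.Icc 1 (2 * n - 2),
              (((j + 1 - l : ℕ) : ℝ) - ((j + 1 - (l + 1) : ℕ) : ℝ)) * b j := by
      rw [← Finset.sum_add_distrib]
      exact Finset.sum_congr rfl fun j _ => by ring
    rw [split, key]
    linarith [hdiff, hrec]

/-! ### Main theorem -/

theorem double_sum_upper_bound
    (n : ℕ) (hn : 2 ≤ n) (f : ℕ → ℝ)
    (hconv : ∀ i : ℕ, 1 ≤ i → i + 2 ≤ 2 * n - 1 →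
      f (i + 1) - f (i + 2) ≤ f i - f (i + 1))
    (hlast : 0 ≤ f (2 * n - 2) - f (2 * n - 1))
    (b : ℕ → ℝ)
    (hb : ∀ j : ℕ, 1 ≤ j → j ≤ 2 * n - 3 →
      b j = (f j - f (j + 1)) - (f (j + 1) - f (j + 2)))
    (hblast : b (2 * n - 2) = f (2 * n - 2) - f (2 * n - 1))
    (A B : Finset ℕ) (hdisj : Disjoint A B)
    (hunion : A ∪ B = Finset.Icc 1 (2 * n))
    (hA : A.card = n) (hB : B.card = n) :
    ∑ x ∈ A, ∑ y ∈ B, f (Nat.dist x y) ≤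
      (n : ℝ) ^ 2 * f (2 * n - 1) + ∑ j ∈ Finset.Icc 1 (2 * n - 2), cConst n j * b j := by
  have hAs : A ⊆ Finset.Icc 1 (2 * n) := hunion ▸ Finset.subset_union_left
  have hBs : B ⊆ Finset.Icc 1 (2 * n) := hunion ▸ Finset.subset_union_right
  -- b is nonnegative
  have hbpos : ∀ j ∈ Finset.Icc 1 (2 * n - 2), 0 ≤ b j := by
    intro j hj
    simp only [Finset.mem_Icc] at hj
    rcases Nat.lt_or_ge j (2 * n - 2) with h | h
    · have h3 : j ≤ 2 * n - 3 := by omega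
      rw [hb j hj.1 h3]
      have := hconv j hj.1 (by omega)
      linarith
    · have hj' : j = 2 * n - 2 := by omega
      rw [hj', hblast]
      exact hlast
  -- pointwise decomposition
  have hpt : ∀ x ∈ A, ∀ y ∈ B, f (Nat.dist x y)
      = f (2 * n - 1) + ∑ j ∈ Finset.Icc 1 (2 * n - 2),
          ((j + 1 - Nat.dist x y : ℕ) : ℝ) * b j := by
    intro x hx y hy
    have hx' := Finset.mem_Icc.mp (hAs hx)
    have hy' := Finset.mem_Icc.mp (hBs hy)
    have hne : x ≠ y := fun h => Finset.disjoint_left.mp hdisj hx (h ▸ hy)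
    have hd : Nat.dist x y = x - y + (y - x) := rfl
    exact f_decomp n f b hn hb hblast (2 * n - 1 - Nat.dist x y) (Nat.dist x y) rfl
      (by omega) (by omega)
  rw [Finset.sum_congr rfl (fun x hx => Finset.sum_congr rfl (fun y hy => hpt x hx y hy))]
  have expand : ∑ x ∈ A, ∑ y ∈ B, (f (2 * n - 1) + ∑ j ∈ Finset.Icc 1 (2 * n - 2),
        ((j + 1 - Nat.dist x y : ℕ) : ℝ) * b j)
      = (n : ℝ) ^ 2 * f (2 * n - 1) + ∑ j ∈ Finset.Icc 1 (2 * n - 2),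
          (∑ x ∈ A, ∑ y ∈ B, ((j + 1 - Nat.dist x y : ℕ) : ℝ)) * b j := by
    rw [Finset.sum_congr rfl (fun x (_ : x ∈ A) => Finset.sum_add_distrib),
      Finset.sum_add_distrib]
    congr 1
    · simp only [Finset.sum_const, hA, hB, nsmul_eq_mul]
      ring
    · rw [Finset.sum_congr rfl (fun x (_ : x ∈ A) => Finset.sum_comm), Finset.sum_comm]
      apply Finset.sum_congr rfl
      intro j _
      rw [Finset.sum_mul]
      apply Finset.sum_congr rfl
      intro x _
      rw [Finset.sum_mul]
  rw [expand]
  apply add_le_add_right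
  apply Finset.sum_le_sum
  intro j hj
  simp only [Finset.mem_Icc] at hj
  apply mul_le_mul_of_nonneg_right _ (hbpos j (Finset.mem_Icc.mpr hj))
  have hcast : ∑ x ∈ A, ∑ y ∈ B, ((j + 1 - Nat.dist x y : ℕ) : ℝ)
      = ((∑ x ∈ A, ∑ y ∈ B, (j + 1 - Nat.dist x y) : ℕ) : ℝ) := by
    push_cast
    rfl
  rw [hcast]
  exact S_le n j hj.1 hj.2 hn A B hdisj hunion
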